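/- arXiv:2311.18095 — 11 statements merged into one kernel-verified Lean document; each statement's English description precedes it below -/
import Mathlib

section
/- Let A and C be frames, f : A → C a surjective frame homomorphism, and B a non-archimedean base of A. Then the image f '' B is a non-archimedean base of C. (Hence every quotient of a non-archimedean frame is non-archimedean.) -/
/-- The image of a non-archimedean base under a surjective frame
homomorphism is a non-archimedean base of the codomain. -/
theorem image_of_nonarchimedean_base_is_nonarchimedean_base
    {A C : Type*} [Order.Frame A] [Order.Frame C]
    (f : FrameHom A C) (hf : Function.Surjective f) (B : Set A)
    (hbase : ∀ a : A, a = sSup {b ∈ B | b ≤ a})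
    (htri : ∀ b₁ ∈ B, ∀ b₂ ∈ B, b₁ ⊓ b₂ = ⊥ ∨ b₁ ≤ b₂ ∨ b₂ ≤ b₁) :
    (∀ c : C, c = sSup {d ∈ f '' B | d ≤ c}) ∧
    (∀ d₁ ∈ f '' B, ∀ d₂ ∈ f '' B, d₁ ⊓ d₂ = ⊥ ∨ d₁ ≤ d₂ ∨ d₂ ≤ d₁) := by
  constructor
  · intro c
    obtain ⟨a, rfl⟩ := hf c
    apply le_antisymm
    · conv_lhs => rw [hbase a]
      rw [map_sSup]
      apply sSup_le
      rintro x ⟨b, ⟨hbB, hba⟩, rfl⟩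
      exact le_sSup ⟨⟨b, hbB, rfl⟩, (OrderHomClass.mono f hba : f b ≤ f a)⟩
    · exact sSup_le fun x hx => hx.2
  · rintro d₁ ⟨b₁, hb₁, rfl⟩ d₂ ⟨b₂, hb₂, rfl⟩
    rcases htri b₁ hb₁ b₂ hb₂ with h | h | h
    · left; rw [← map_inf, h, map_bot]
    · right; left; exact OrderHomClass.mono f h
    · right; right; exact OrderHomClass.mono f h
end

section
/- Let B be a non-archimedean base of a frame A, let b ∈ B, and let c ∈ A with ⊥ < c ≤ b. If c is complemented, i.e. c ⊔ cᶜ = ⊤, then b is complemented: b ⊔ bᶜ = ⊤. -/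
/-- If `b` is a member of a non-archimedean base and some complemented
`c` with `⊥ < c ≤ b` exists, then `b` is complemented. -/
theorem complemented_of_le_basic
    {A : Type*} [Order.Frame A] (B : Set A)
    (hbase : ∀ a : A, a = sSup {b ∈ B | b ≤ a})
    (htri : ∀ b₁ ∈ B, ∀ b₂ ∈ B, b₁ ⊓ b₂ = ⊥ ∨ b₁ ≤ b₂ ∨ b₂ ≤ b₁)
    (b : A) (hb : b ∈ B) (c : A) (hc : ⊥ < c) (hcb : c ≤ b)
    (hcomp : c ⊔ cᶜ = ⊤) :
    b ⊔ bᶜ = ⊤ := by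
  have hcc : cᶜ ≤ b ⊔ bᶜ := by
    rw [hbase cᶜ]
    apply sSup_le
    rintro d ⟨hdB, hdc⟩
    rcases htri d hdB b hb with h | h | h
    · exact le_sup_of_le_right (le_compl_iff_disjoint_right.2 (disjoint_iff.2 h))
    · exact le_sup_of_le_left h
    · exfalso
      have h2 : c ≤ c ⊓ cᶜ := le_inf le_rfl (hcb.trans (h.trans hdc))
      simp only [inf_compl_self, le_bot_iff] at h2
      exact hc.ne' h2
  have : (⊤ : A) ≤ b ⊔ bᶜ := by
    rw [← hcomp]
    exact sup_le (le_sup_of_le_left hcb) hcc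
  exact top_le_iff.mp this
end

section
/- Let B be a non-archimedean base of a frame A and let a ∈ A with a ≠ ⊥. If m := sInf {b ∈ B | b ≤ a} is not ⊥, then m ≤ a and m is an atom of A, i.e. m ≠ ⊥ and every x < m equals ⊥. (In particular, if the infimum of the local base at a is nonzero, there is an atom below a.) -/
/-- If the infimum `m` of the local base at `a ≠ ⊥` is nonzero, then
`m ≤ a` and `m` is an atom. -/
theorem atom_of_nonzero_inf_of_local_base
    {A : Type*} [Order.Frame A] (B : Set A)
    (hbase : ∀ a : A, a = sSup {b ∈ B | b ≤ a})
    (htri : ∀ b₁ ∈ B, ∀ b₂ ∈ B, b₁ ⊓ b₂ = ⊥ ∨ b₁ ≤ b₂ ∨ b₂ ≤ b₁)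
    (a : A) (ha : a ≠ ⊥)
    (hm : sInf {b ∈ B | b ≤ a} ≠ ⊥) :
    sInf {b ∈ B | b ≤ a} ≤ a ∧ IsAtom (sInf {b ∈ B | b ≤ a}) := by
  have hne : {b ∈ B | b ≤ a}.Nonempty := by
    by_contra h
    rw [Set.not_nonempty_iff_eq_empty] at h
    exact ha ((hbase a).trans (by rw [h, sSup_empty]))
  obtain ⟨b, hbB, hba⟩ := hne
  have hma : sInf {b ∈ B | b ≤ a} ≤ a := le_trans (sInf_le ⟨hbB, hba⟩) hba
  refine ⟨hma, hm, fun x hx => ?_⟩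
  by_contra hxne
  obtain ⟨c, hcB, hcx⟩ : ∃ c ∈ B, c ≤ x := by
    by_contra h
    push_neg at h
    apply hxne
    have : {b ∈ B | b ≤ x} = ∅ := by
      ext y; simp only [Set.mem_setOf_eq, Set.mem_empty_iff_false, iff_false]
      rintro ⟨hy, hy'⟩; exact absurd hy' (h y hy)
    rw [hbase x, this, sSup_empty]
  have hcS : c ∈ {b ∈ B | b ≤ a} := ⟨hcB, le_trans hcx (le_trans hx.le hma)⟩
  exact absurd (le_trans (sInf_le hcS) hcx) (not_le_of_gt hx)
end

section
/- Let B be a non-archimedean base of a frame A, let a ∈ B, and let C be a nonempty chain contained in B with a ⊓ sSup C ≠ ⊥. Then either a ≤ c for some c ∈ C, or sSup C ≤ a. -/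
/-- For `a` in a non-archimedean base `B` and a nonempty chain `C ⊆ B`
with `a ⊓ sSup C ≠ ⊥`, either `a ≤ c` for some `c ∈ C`, or `sSup C ≤ a`. -/
theorem le_chain_or_sSup_chain_le
    {A : Type*} [Order.Frame A] (B : Set A)
    (hbase : ∀ a : A, a = sSup {b ∈ B | b ≤ a})
    (htri : ∀ b₁ ∈ B, ∀ b₂ ∈ B, b₁ ⊓ b₂ = ⊥ ∨ b₁ ≤ b₂ ∨ b₂ ≤ b₁)
    (a : A) (ha : a ∈ B)
    (C : Set A) (hCB : C ⊆ B) (hCne : C.Nonempty) (hC : IsChain (· ≤ ·) C)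
    (h : a ⊓ sSup C ≠ ⊥) :
    (∃ c ∈ C, a ≤ c) ∨ sSup C ≤ a := by
  by_cases hex : ∃ c ∈ C, a ≤ c
  · exact Or.inl hex
  push_neg at hex
  right
  by_contra hns
  -- get some c₀ ∈ C with ¬ c₀ ≤ a
  obtain ⟨c₀, hc₀C, hc₀⟩ : ∃ c ∈ C, ¬ c ≤ a := by
    by_contra hall
    push_neg at hall
    exact hns (sSup_le hall)
  have hc₀bot : a ⊓ c₀ = ⊥ := by
    rcases htri a ha c₀ (hCB hc₀C) with h1 | h2 | h3
    · exact h1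
    · exact absurd h2 (hex c₀ hc₀C)
    · exact absurd h3 hc₀
  have hall : ∀ c ∈ C, a ⊓ c = ⊥ := by
    intro c hcC
    rcases eq_or_ne c c₀ with rfl | hne
    · exact hc₀bot
    rcases hC hcC hc₀C hne with hle | hge
    · exact le_antisymm (hc₀bot ▸ inf_le_inf_left a hle) bot_le
    · rcases htri a ha c (hCB hcC) with h1 | h2 | h3
      · exact h1
      · exact absurd h2 (hex c hcC)
      · exact absurd (h3.trans' hge) hc₀
  apply h
  rw [inf_sSup_eq]
  exact le_antisymm (iSup₂_le fun c hc => (hall c hc).le) bot_le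
end

section
/- Let B be a non-archimedean base of a frame A. Then the set B̄ = {sSup C | C is a nonempty chain contained in B} is again a non-archimedean base of A. -/
private lemma chain_inf_bot {A : Type*} [Order.Frame A] {B C D : Set A}
    (htri : ∀ b₁ ∈ B, ∀ b₂ ∈ B, b₁ ⊓ b₂ = ⊥ ∨ b₁ ≤ b₂ ∨ b₂ ≤ b₁)
    (hCB : C ⊆ B) (hDB : D ⊆ B) (hCch : IsChain (· ≤ ·) C) (hDch : IsChain (· ≤ ·) D)
    {c₀ d₀ : A} (hc₀C : c₀ ∈ C) (hd₀D : d₀ ∈ D)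
    (hc₀ : ∀ d ∈ D, ¬ c₀ ≤ d) (hd₀ : ∀ c ∈ C, ¬ d₀ ≤ c)
    {c d : A} (hcC : c ∈ C) (hdD : d ∈ D) (hcd : c ≤ d) : c ⊓ d = ⊥ := by
  have hcc₀ : c ≤ c₀ := by
    rcases hCch.total hcC hc₀C with h | h
    · exact h
    · exact absurd (h.trans hcd) (hc₀ d hdD)
  rcases htri c₀ (hCB hc₀C) d (hDB hdD) with h | h | h
  · have hc' : c ≤ ⊥ := by rw [← h]; exact le_inf hcc₀ hcd
    simp [le_bot_iff.mp hc']
  · exact absurd h (hc₀ d hdD)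
  · have hdd₀ : d ≤ d₀ := by
      rcases hDch.total hdD hd₀D with h' | h'
      · exact h'
      · exact absurd (h'.trans h) (hd₀ c₀ hc₀C)
    have hb : c₀ ⊓ d₀ = ⊥ := by
      rcases htri c₀ (hCB hc₀C) d₀ (hDB hd₀D) with h' | h' | h'
      · exact h'
      · exact absurd h' (hc₀ d₀ hd₀D)
      · exact absurd h' (hd₀ c₀ hc₀C)
    have hd' : d ≤ ⊥ := by rw [← hb]; exact le_inf h hdd₀
    simp [le_bot_iff.mp hd']

/-- The set of suprema of nonempty chains contained in a
non-archimedean base is again a non-archimedean base. -/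
theorem sSup_chains_nonarchimedean_base
    {A : Type*} [Order.Frame A] (B : Set A)
    (hbase : ∀ a : A, a = sSup {b ∈ B | b ≤ a})
    (htri : ∀ b₁ ∈ B, ∀ b₂ ∈ B, b₁ ⊓ b₂ = ⊥ ∨ b₁ ≤ b₂ ∨ b₂ ≤ b₁) :
    (∀ a : A, a = sSup {b ∈ {x : A | ∃ C : Set A, C ⊆ B ∧ C.Nonempty ∧
        IsChain (· ≤ ·) C ∧ sSup C = x} | b ≤ a}) ∧
    (∀ b₁ ∈ {x : A | ∃ C : Set A, C ⊆ B ∧ C.Nonempty ∧ IsChain (· ≤ ·) C ∧ sSup C = x},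
     ∀ b₂ ∈ {x : A | ∃ C : Set A, C ⊆ B ∧ C.Nonempty ∧ IsChain (· ≤ ·) C ∧ sSup C = x},
        b₁ ⊓ b₂ = ⊥ ∨ b₁ ≤ b₂ ∨ b₂ ≤ b₁) := by
  have hsub : B ⊆ {x : A | ∃ C : Set A, C ⊆ B ∧ C.Nonempty ∧ IsChain (· ≤ ·) C ∧ sSup C = x} :=
    fun b hb => ⟨{b}, by simpa, Set.singleton_nonempty b,
      Set.subsingleton_singleton.isChain, sSup_singleton⟩
  constructor
  · intro a
    apply le_antisymm
    · conv_lhs => rw [hbase a]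
      exact sSup_le_sSup (fun b hb => ⟨hsub hb.1, hb.2⟩)
    · exact sSup_le fun b hb => hb.2
  · rintro b₁ ⟨C, hCB, hCne, hCch, rfl⟩ b₂ ⟨D, hDB, hDne, hDch, rfl⟩
    by_cases h1 : sSup C ≤ sSup D
    · exact Or.inr (Or.inl h1)
    by_cases h2 : sSup D ≤ sSup C
    · exact Or.inr (Or.inr h2)
    left
    obtain ⟨c₀, hc₀C, hc₀⟩ : ∃ c ∈ C, ∀ d ∈ D, ¬ c ≤ d := by
      by_contra h
      push_neg at h
      refine h1 (sSup_le fun c hc => ?_)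
      obtain ⟨d, hd, hcd⟩ := h c hc
      exact hcd.trans (le_sSup hd)
    obtain ⟨d₀, hd₀D, hd₀⟩ : ∃ d ∈ D, ∀ c ∈ C, ¬ d ≤ c := by
      by_contra h
      push_neg at h
      refine h2 (sSup_le fun d hd => ?_)
      obtain ⟨c, hc, hdc⟩ := h d hd
      exact hdc.trans (le_sSup hc)
    have key : ∀ c ∈ C, ∀ d ∈ D, c ⊓ d = ⊥ := by
      intro c hc d hd
      rcases htri c (hCB hc) d (hDB hd) with h | h | h
      · exact h
      · exact chain_inf_bot htri hCB hDB hCch hDch hc₀C hd₀D hc₀ hd₀ hc hd h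
      · rw [inf_comm]
        exact chain_inf_bot htri hDB hCB hDch hCch hd₀D hc₀C hd₀ hc₀ hd hc h
    rw [eq_bot_iff, sSup_inf_sSup]
    exact iSup₂_le fun p hp => (key p.1 hp.1 p.2 hp.2).le
end

section
/- Let B be a non-archimedean base of a frame A and let B̄ = {sSup C | C is a nonempty chain contained in B}. Then B̄ is closed under suprema of chains: for every nonempty chain D contained in B̄, sSup D ∈ B̄. -/
/-- The base of suprema of nonempty chains of a non-archimedean base is
closed under suprema of nonempty chains. -/
theorem sSup_chains_closed_under_sSup_of_chains
    {A : Type*} [Order.Frame A] (B : Set A)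
    (hbase : ∀ a : A, a = sSup {b ∈ B | b ≤ a})
    (htri : ∀ b₁ ∈ B, ∀ b₂ ∈ B, b₁ ⊓ b₂ = ⊥ ∨ b₁ ≤ b₂ ∨ b₂ ≤ b₁) :
    ∀ D : Set A,
      D ⊆ {x : A | ∃ C : Set A, C ⊆ B ∧ C.Nonempty ∧ IsChain (· ≤ ·) C ∧ sSup C = x} →
      D.Nonempty → IsChain (· ≤ ·) D →
      sSup D ∈ {x : A | ∃ C : Set A, C ⊆ B ∧ C.Nonempty ∧ IsChain (· ≤ ·) C ∧ sSup C = x} := by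
  intro D hD hDne hDchain
  choose F hFB hFne hFch hFs using hD
  by_cases hbot : ∀ c : A, (∃ d : A, ∃ hd : d ∈ D, c ∈ F hd) → c = ⊥
  · -- every element of every witness chain is ⊥, hence sSup D = ⊥
    obtain ⟨d₀, hd₀⟩ := hDne
    refine ⟨F hd₀, hFB hd₀, hFne hd₀, hFch hd₀, ?_⟩
    have h1 : ∀ d, d ∈ D → d = ⊥ := by
      intro d hd
      rw [← hFs hd]
      exact le_bot_iff.mp (sSup_le fun c hc => (hbot c ⟨d, hd, hc⟩).le)
    rw [hFs hd₀, h1 d₀ hd₀]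
    exact (le_bot_iff.mp (sSup_le fun d hd => (h1 d hd).le)).symm
  · push_neg at hbot
    obtain ⟨u₀, ⟨d₀, hd₀, hu₀F⟩, hu₀ne⟩ := hbot
    have hu₀B : u₀ ∈ B := hFB hd₀ hu₀F
    have hu₀d₀ : u₀ ≤ d₀ := (hFs hd₀) ▸ le_sSup hu₀F
    set C : Set A := insert u₀ {c : A | (∃ d : A, ∃ hd : d ∈ D, c ∈ F hd) ∧ u₀ ≤ c} with hC
    have hCB : C ⊆ B := by
      rintro c (rfl | ⟨⟨d, hd, hcF⟩, -⟩)
      · exact hu₀B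
      · exact hFB hd hcF
    have hCu : ∀ c ∈ C, u₀ ≤ c := by
      rintro c (rfl | ⟨-, h⟩)
      · exact le_rfl
      · exact h
    have hCch : IsChain (· ≤ ·) C := by
      intro x hx y hy hxy
      rcases htri x (hCB hx) y (hCB hy) with h | h | h
      · exact absurd (le_bot_iff.mp (h ▸ le_inf (hCu x hx) (hCu y hy))) hu₀ne
      · exact Or.inl h
      · exact Or.inr h
    -- key: every d ∈ D with u₀ ≤ d satisfies d ≤ sSup C
    have hkey : ∀ d : A, ∀ hd : d ∈ D, u₀ ≤ d → d ≤ sSup C := by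
      intro d hd hu₀d
      rw [← hFs hd] at hu₀d ⊢
      refine sSup_le fun c hc => ?_
      -- find c' in F hd meeting u₀
      have hex : ∃ c' ∈ F hd, u₀ ⊓ c' ≠ ⊥ := by
        by_contra h
        push_neg at h
        apply hu₀ne
        have : u₀ ⊓ sSup (F hd) = ⊥ := by
          rw [inf_sSup_eq]
          exact le_bot_iff.mp (iSup₂_le fun c' hc' => (h c' hc').le)
        rw [inf_eq_left.mpr hu₀d] at this
        exact this
      obtain ⟨c', hc', hne⟩ := hex
      have hc'B : c' ∈ B := hFB hd hc'
      have hcB : c ∈ B := hFB hd hc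
      have hcc' : c ≤ c' ∨ c' ≤ c := (hFch hd).total hc hc'
      rcases hcc' with h1 | h1
      · rcases htri u₀ hu₀B c' hc'B with h2 | h2 | h2
        · exact absurd h2 hne
        · exact le_trans h1 (le_sSup (Or.inr ⟨⟨d, hd, hc'⟩, h2⟩))
        · exact le_trans (h1.trans h2) (le_sSup (Or.inl rfl))
      · have hne2 : u₀ ⊓ c ≠ ⊥ := fun h =>
          hne (le_bot_iff.mp (h ▸ inf_le_inf_left u₀ h1))
        rcases htri u₀ hu₀B c hcB with h2 | h2 | h2
        · exact absurd h2 hne2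
        · exact le_sSup (Or.inr ⟨⟨d, hd, hc⟩, h2⟩)
        · exact le_trans h2 (le_sSup (Or.inl rfl))
    refine ⟨C, hCB, ⟨u₀, Or.inl rfl⟩, hCch, le_antisymm ?_ ?_⟩
    · refine sSup_le ?_
      rintro c (rfl | ⟨⟨d, hd, hcF⟩, -⟩)
      · exact hu₀d₀.trans (le_sSup hd₀)
      · exact le_trans ((hFs hd) ▸ le_sSup hcF) (le_sSup hd)
    · refine sSup_le fun d hd => ?_
      rcases eq_or_ne d d₀ with rfl | hne
      · exact hkey d hd hu₀d₀
      · rcases hDchain hd hd₀ hne with h | h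
        · exact h.trans (hkey d₀ hd₀ hu₀d₀)
        · exact hkey d hd (hu₀d₀.trans h)
end

section
/- (Canonical form) Let B be a non-archimedean base of a frame A that is closed under suprema of nonempty chains (sSup C ∈ B for every nonempty chain C ⊆ B). Then every a ∈ A is the supremum of a pairwise disjoint subset of B: there exists S ⊆ B with sSup S = a and x ⊓ y = ⊥ for all x, y ∈ S with x ≠ y. -/
/-- Canonical form: if a non-archimedean base is closed under suprema
of nonempty chains, then every element is the supremum of a pairwise disjoint
subset of the base. -/
theorem canonical_form_disjoint_decomposition
    {A : Type*} [Order.Frame A] (B : Set A)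
    (hbase : ∀ a : A, a = sSup {b ∈ B | b ≤ a})
    (htri : ∀ b₁ ∈ B, ∀ b₂ ∈ B, b₁ ⊓ b₂ = ⊥ ∨ b₁ ≤ b₂ ∨ b₂ ≤ b₁)
    (hclosed : ∀ C : Set A, C ⊆ B → C.Nonempty → IsChain (· ≤ ·) C → sSup C ∈ B) :
    ∀ a : A, ∃ S : Set A, S ⊆ B ∧ sSup S = a ∧
      ∀ x ∈ S, ∀ y ∈ S, x ≠ y → x ⊓ y = ⊥ := by
  intro a
  set T : Set A := {b ∈ B | b ≤ a} with hT
  set S : Set A := {m | Maximal (· ∈ T) m} with hS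
  have hST : S ⊆ T := fun m hm => hm.1
  have hSB : S ⊆ B := fun m hm => (hST hm).1
  -- every element of T is below a maximal element
  have hmax : ∀ x ∈ T, ∃ m, x ≤ m ∧ Maximal (· ∈ T) m := by
    intro x hx
    refine zorn_le_nonempty₀ T ?_ x hx
    intro c hcT hc y hy
    refine ⟨sSup c, ⟨hclosed c (fun z hz => (hcT hz).1) ⟨y, hy⟩ hc,
      sSup_le fun z hz => (hcT hz).2⟩, fun z hz => le_sSup hz⟩
  refine ⟨S, hSB, ?_, ?_⟩
  · apply le_antisymm (sSup_le fun m hm => (hST hm).2)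
    conv_lhs => rw [hbase a]
    apply sSup_le
    intro b hb
    obtain ⟨m, hbm, hm⟩ := hmax b hb
    exact hbm.trans (le_sSup hm)
  · intro x hx y hy hxy
    rcases htri x (hSB hx) y (hSB hy) with h | h | h
    · exact h
    · exact absurd (hx.eq_of_le (hy.1) h) hxy
    · exact absurd (hy.eq_of_le (hx.1) h) hxy.symm
end

section
/- Let P be a partial order in which for every a ∈ P the set {x ∈ P | x ≤ a} is a chain. Then the family of sets U_t (t ∈ P) satisfies the trichotomy law: for all s, t ∈ P, either U_s ∩ U_t = ∅, or U_s ⊆ U_t, or U_t ⊆ U_s. -/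
lemma mem_of_le_mem_maxchain {P : Type*} [PartialOrder P]
    (hP : ∀ a : P, IsChain (· ≤ ·) {x : P | x ≤ a})
    {s t : P} (hts : t ≤ s) {ξ : Set P} (hξ : IsMaxChain (· ≤ ·) ξ)
    (hs : s ∈ ξ) : t ∈ ξ := by
  have hchain : IsChain (· ≤ ·) (insert t ξ) := by
    intro x hx y hy hxy
    rcases hx with rfl | hx
    · rcases hy with rfl | hy
      · exact absurd rfl hxy
      · rcases hξ.1.total hy hs with h | h
        · exact (hP s) (show x ∈ {z : P | z ≤ s} from hts)
            (show y ∈ {z : P | z ≤ s} from h) hxy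
        · exact Or.inl (le_trans hts h)
    · rcases hy with rfl | hy
      · rcases hξ.1.total hx hs with h | h
        · exact ((hP s) (show x ∈ {z : P | z ≤ s} from h)
            (show y ∈ {z : P | z ≤ s} from hts) hxy)
        · exact Or.inr (le_trans hts h)
      · exact hξ.1 hx hy hxy
  have := hξ.2 hchain (Set.subset_insert t ξ)
  rw [this]
  exact Set.mem_insert t ξ

/-- In a partial order whose principal downsets are chains, the sets
`U_t` of branches through `t` satisfy the trichotomy law. -/
theorem branch_sets_trichotomy
    {P : Type*} [PartialOrder P]
    (hP : ∀ a : P, IsChain (· ≤ ·) {x : P | x ≤ a}) :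
    ∀ s t : P,
      {ξ : Set P | IsMaxChain (· ≤ ·) ξ ∧ s ∈ ξ} ∩
          {ξ : Set P | IsMaxChain (· ≤ ·) ξ ∧ t ∈ ξ} = ∅ ∨
      {ξ : Set P | IsMaxChain (· ≤ ·) ξ ∧ s ∈ ξ} ⊆
          {ξ : Set P | IsMaxChain (· ≤ ·) ξ ∧ t ∈ ξ} ∨
      {ξ : Set P | IsMaxChain (· ≤ ·) ξ ∧ t ∈ ξ} ⊆
          {ξ : Set P | IsMaxChain (· ≤ ·) ξ ∧ s ∈ ξ} := by
  intro s t
  by_cases hne : {ξ : Set P | IsMaxChain (· ≤ ·) ξ ∧ s ∈ ξ} ∩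
      {ξ : Set P | IsMaxChain (· ≤ ·) ξ ∧ t ∈ ξ} = ∅
  · exact Or.inl hne
  · obtain ⟨ξ, ⟨⟨hξ, hsξ⟩, ⟨_, htξ⟩⟩⟩ := Set.nonempty_iff_ne_empty.mpr hne
    rcases eq_or_ne s t with rfl | hst
    · exact Or.inr (Or.inl (fun _ h => h))
    rcases hξ.1.total hsξ htξ with h | h
    · exact Or.inr (Or.inr (fun η ⟨hη, htη⟩ =>
        ⟨hη, mem_of_le_mem_maxchain hP h hη htη⟩))
    · exact Or.inr (Or.inl (fun η ⟨hη, hsη⟩ =>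
        ⟨hη, mem_of_le_mem_maxchain hP h hη hsη⟩))
end

section
/- Let P be a nonempty partial order, and for an upper set U of P define k*(U) = {ξ | ξ is a maximal chain of P and ξ ∩ U ≠ ∅}. Then k*(P) is the set of all maximal chains, k*(∅) = ∅, k* preserves arbitrary unions (k*(⋃ᵢ Uᵢ) = ⋃ᵢ k*(Uᵢ) for any family of upper sets Uᵢ), and k* preserves binary intersections (k*(U ∩ V) = k*(U) ∩ k*(V) for upper sets U, V). Consequently, {k*(U) | U an upper set of P} is a topology on the set of maximal chains of P. -/
lemma maxChain_nonempty {P : Type*} [PartialOrder P] [Nonempty P]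
    {ξ : Set P} (h : IsMaxChain (· ≤ ·) ξ) : ξ.Nonempty := by
  obtain ⟨x⟩ := ‹Nonempty P›
  by_contra hne
  rw [Set.not_nonempty_iff_eq_empty] at hne
  have := h.2 (t := {x}) IsChain.singleton (by simp [hne])
  rw [hne] at this
  exact Set.singleton_ne_empty x this.symm

lemma kstar_iUnion {P : Type*} [PartialOrder P]
    (kstar : Set P → Set {ξ : Set P // IsMaxChain (· ≤ ·) ξ})
    (hk : ∀ (U : Set P) (ξ : {ξ : Set P // IsMaxChain (· ≤ ·) ξ}),
      ξ ∈ kstar U ↔ (ξ.1 ∩ U).Nonempty)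
    {ι : Type*} (Us : ι → Set P) :
    kstar (⋃ i, Us i) = ⋃ i, kstar (Us i) := by
  ext ξ
  simp only [hk, Set.mem_iUnion, hk]
  constructor
  · rintro ⟨x, hxξ, hxU⟩
    obtain ⟨_, ⟨i, rfl⟩, hx⟩ := hxU
    exact ⟨i, x, hxξ, hx⟩
  · rintro ⟨i, x, hxξ, hx⟩
    exact ⟨x, hxξ, Set.mem_iUnion.2 ⟨i, hx⟩⟩

/-- For a nonempty partial order `P`, the map
`k*(U) = {maximal chains meeting U}` sends the whole poset to all maximal chains,
`∅` to `∅`, preserves arbitrary unions of upper sets and binary intersections of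
upper sets; consequently its image is a topology on the set of maximal chains. -/
theorem kstar_topology
    {P : Type*} [PartialOrder P] [Nonempty P]
    (kstar : Set P → Set {ξ : Set P // IsMaxChain (· ≤ ·) ξ})
    (hk : ∀ (U : Set P) (ξ : {ξ : Set P // IsMaxChain (· ≤ ·) ξ}),
      ξ ∈ kstar U ↔ (ξ.1 ∩ U).Nonempty) :
    kstar Set.univ = Set.univ ∧
    kstar ∅ = ∅ ∧
    (∀ (ι : Type*) (Us : ι → Set P), (∀ i, IsUpperSet (Us i)) →
      kstar (⋃ i, Us i) = ⋃ i, kstar (Us i)) ∧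
    (∀ U V : Set P, IsUpperSet U → IsUpperSet V →
      kstar (U ∩ V) = kstar U ∩ kstar V) ∧
    (∃ T : TopologicalSpace {ξ : Set P // IsMaxChain (· ≤ ·) ξ},
      ∀ V : Set {ξ : Set P // IsMaxChain (· ≤ ·) ξ},
        T.IsOpen V ↔ ∃ U : Set P, IsUpperSet U ∧ kstar U = V) := by
  have huniv : kstar Set.univ = Set.univ := by
    ext ξ
    simp only [hk, Set.inter_univ, Set.mem_univ, iff_true]
    exact maxChain_nonempty ξ.2
  have hempty : kstar ∅ = ∅ := by
    ext ξ; simp [hk]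
  have hinter : ∀ U V : Set P, IsUpperSet U → IsUpperSet V →
      kstar (U ∩ V) = kstar U ∩ kstar V := by
    intro U V hU hV
    ext ξ
    simp only [hk, Set.mem_inter_iff, hk]
    constructor
    · rintro ⟨x, hxξ, hxU, hxV⟩
      exact ⟨⟨x, hxξ, hxU⟩, ⟨x, hxξ, hxV⟩⟩
    · rintro ⟨⟨a, haξ, haU⟩, ⟨b, hbξ, hbV⟩⟩
      rcases eq_or_ne a b with rfl | hab
      · exact ⟨a, haξ, haU, hbV⟩
      rcases ξ.2.1 haξ hbξ hab with h | h
      · exact ⟨b, hbξ, hU h haU, hbV⟩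
      · exact ⟨a, haξ, haU, hV h hbV⟩
  refine ⟨huniv, hempty, fun ι Us _ => kstar_iUnion kstar hk Us, hinter, ?_⟩
  refine ⟨{ IsOpen := fun V => ∃ U : Set P, IsUpperSet U ∧ kstar U = V,
            isOpen_univ := ⟨Set.univ, isUpperSet_univ, huniv⟩,
            isOpen_inter := ?_, isOpen_sUnion := ?_ }, fun V => Iff.rfl⟩
  · rintro s t ⟨U, hU, rfl⟩ ⟨V, hV, rfl⟩
    exact ⟨U ∩ V, hU.inter hV, hinter U V hU hV⟩
  · intro S hS
    choose f hf1 hf2 using hS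
    refine ⟨⋃ s : {s // s ∈ S}, f s.1 s.2, isUpperSet_iUnion fun s => hf1 s.1 s.2, ?_⟩
    have h1 : kstar (⋃ s : {s // s ∈ S}, f s.1 s.2)
        = ⋃ s : {s // s ∈ S}, kstar (f s.1 s.2) := kstar_iUnion kstar hk (fun s : {s // s ∈ S} => f s.1 s.2)
    rw [h1]
    rw [Set.sUnion_eq_iUnion]
    exact Set.iUnion_congr fun s => hf2 s.1 s.2
end

section
/- Let P be a nonempty partial order in which for every a ∈ P the set {x ∈ P | x ≤ a} is a chain, and for an upper set U of P let k*(U) = {ξ branch of P | ξ ∩ U ≠ ∅}. Then a set V of branches of P belongs to {k*(U) | U an upper set of P} if and only if V is open in the topology on the set of branches generated by {U_t | t ∈ P}; i.e. the topology {k*(U) | U upper set} coincides with the topology generated by the sets U_t. -/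
section Aux

variable {P : Type*} [PartialOrder P] [Nonempty P]

/-- In a partial order whose principal downsets are chains, a maximal chain is
downward closed. -/
lemma branch_mem_of_le {ξ : Set P} (hξ : IsMaxChain (· ≤ ·) ξ)
    (hP : ∀ a : P, IsChain (· ≤ ·) {x : P | x ≤ a})
    {t x : P} (hx : x ∈ ξ) (h : t ≤ x) : t ∈ ξ := by
  have hchain : IsChain (· ≤ ·) (insert t ξ) := by
    refine hξ.1.insert ?_
    intro y hy hne
    rcases eq_or_ne y x with rfl | hyx
    · exact Or.inl h
    · rcases hξ.1 hy hx hyx with hle | hge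
      · exact (hP x) (by exact h) (by exact hle) hne
      · exact Or.inl (h.trans hge)
  have := hξ.2 hchain (Set.subset_insert _ _)
  rw [this]; exact Set.mem_insert _ _

lemma branch_nonempty {ξ : Set P} (hξ : IsMaxChain (· ≤ ·) ξ) : ξ.Nonempty := by
  obtain ⟨a⟩ := ‹Nonempty P›
  by_contra h
  rw [Set.not_nonempty_iff_eq_empty] at h
  have : ξ = {a} := hξ.2 (Set.Subsingleton.isChain (Set.subsingleton_singleton))
    (by rw [h]; exact Set.empty_subset _)
  rw [this] at h
  exact (Set.singleton_nonempty a).ne_empty h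

end Aux

/-- For a nonempty partial order whose principal downsets are chains,
a set of branches is of the form `k*(U)` for an upper set `U` iff it is open in the
topology generated by the sets `U_t`. -/
theorem kstar_topology_eq_generated_topology
    {P : Type*} [PartialOrder P] [Nonempty P]
    (hP : ∀ a : P, IsChain (· ≤ ·) {x : P | x ≤ a}) :
    ∀ V : Set {ξ : Set P // IsMaxChain (· ≤ ·) ξ},
      (∃ U : Set P, IsUpperSet U ∧
          V = {ξ : {ξ : Set P // IsMaxChain (· ≤ ·) ξ} | (ξ.1 ∩ U).Nonempty}) ↔
      (TopologicalSpace.generateFrom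
        {W : Set {ξ : Set P // IsMaxChain (· ≤ ·) ξ} |
          ∃ t : P, W = {ξ : {ξ : Set P // IsMaxChain (· ≤ ·) ξ} | t ∈ ξ.1}}).IsOpen V := by
  intro V
  constructor
  · rintro ⟨U, hU, rfl⟩
    have : {ξ : {ξ : Set P // IsMaxChain (· ≤ ·) ξ} | (ξ.1 ∩ U).Nonempty} =
        ⋃ t ∈ U, {ξ : {ξ : Set P // IsMaxChain (· ≤ ·) ξ} | t ∈ ξ.1} := by
      ext ξ
      simp only [Set.mem_setOf_eq, Set.mem_iUnion]
      constructor
      · rintro ⟨t, htξ, htU⟩; exact ⟨t, htU, htξ⟩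
      · rintro ⟨t, htU, htξ⟩; exact ⟨t, htξ, htU⟩
    rw [this]
    letI : TopologicalSpace {ξ : Set P // IsMaxChain (· ≤ ·) ξ} :=
      TopologicalSpace.generateFrom
        {W : Set {ξ : Set P // IsMaxChain (· ≤ ·) ξ} |
          ∃ t : P, W = {ξ : {ξ : Set P // IsMaxChain (· ≤ ·) ξ} | t ∈ ξ.1}}
    exact isOpen_biUnion fun t _ =>
      TopologicalSpace.GenerateOpen.basic _ ⟨t, rfl⟩
  · intro h
    induction h with
    | basic W hW =>
      obtain ⟨t, rfl⟩ := hW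
      refine ⟨Set.Ici t, isUpperSet_Ici t, ?_⟩
      ext ξ
      simp only [Set.mem_setOf_eq]
      constructor
      · intro ht; exact ⟨t, ht, le_refl t⟩
      · rintro ⟨x, hxξ, hx⟩; exact branch_mem_of_le ξ.2 hP hxξ hx
    | univ =>
      refine ⟨Set.univ, isUpperSet_univ, ?_⟩
      ext ξ
      simp only [Set.mem_univ, true_iff, Set.inter_univ, Set.mem_setOf_eq]
      exact branch_nonempty ξ.2
    | inter A B _ _ ihA ihB =>
      obtain ⟨U, hU, rfl⟩ := ihA
      obtain ⟨U', hU', rfl⟩ := ihB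
      refine ⟨U ∩ U', hU.inter hU', ?_⟩
      ext ξ
      simp only [Set.mem_inter_iff, Set.mem_setOf_eq]
      constructor
      · rintro ⟨⟨u, huξ, huU⟩, ⟨u', hu'ξ, hu'U⟩⟩
        rcases eq_or_ne u u' with rfl | hne
        · exact ⟨u, huξ, huU, hu'U⟩
        · rcases ξ.2.1 huξ hu'ξ hne with hle | hge
          · exact ⟨u', hu'ξ, hU hle huU, hu'U⟩
          · exact ⟨u, huξ, huU, hU' hge hu'U⟩
      · rintro ⟨x, hxξ, hxU, hxU'⟩
        exact ⟨⟨x, hxξ, hxU⟩, ⟨x, hxξ, hxU'⟩⟩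
    | sUnion S _ ihS =>
      choose! U hUupper hUeq using ihS
      refine ⟨⋃ s ∈ S, U s, isUpperSet_iUnion₂ fun s _ => hUupper s ‹_›, ?_⟩
      ext ξ
      simp only [Set.mem_sUnion, Set.mem_setOf_eq]
      constructor
      · rintro ⟨s, hsS, hξs⟩
        rw [hUeq s hsS] at hξs
        obtain ⟨x, hxξ, hxU⟩ := hξs
        exact ⟨x, hxξ, Set.mem_biUnion hsS hxU⟩
      · rintro ⟨x, hxξ, hxU⟩
        obtain ⟨s, hsS, hxUs⟩ := Set.mem_iUnion₂.mp hxU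
        exact ⟨s, hsS, by rw [hUeq s hsS]; exact ⟨x, hxξ, hxUs⟩⟩
end

section
/- Let P be a partial order in which for every a ∈ P the set {x ∈ P | x ≤ a} is a chain. For an upper set U of P define ker(U) = {a ∈ P | every branch of P containing a meets U}. Then ker(U) is again an upper set, and ker is a nucleus on the frame of upper sets of P: U ⊆ ker(U) for every upper set U, ker(U ∩ V) = ker(U) ∩ ker(V) for all upper sets U, V, and ker(ker(U)) = ker(U). -/
private lemma mem_maxChain_of_le {P : Type*} [PartialOrder P]
    (hP : ∀ a : P, IsChain (· ≤ ·) {x : P | x ≤ a})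
    {ξ : Set P} (hξ : IsMaxChain (· ≤ ·) ξ) {a b : P} (hab : a ≤ b) (hb : b ∈ ξ) :
    a ∈ ξ := by
  have hch : IsChain (· ≤ ·) (insert a ξ) := by
    intro x hx y hy hxy
    rcases hx with rfl | hx <;> rcases hy with rfl | hy
    · exact absurd rfl hxy
    · rcases eq_or_ne y b with rfl | hyb
      · exact Or.inl hab
      · rcases hξ.1 hy hb hyb with h | h
        · exact hP b hab h hxy
        · exact Or.inl (hab.trans h)
    · rcases eq_or_ne x b with rfl | hxb
      · exact Or.inr hab
      · rcases hξ.1 hx hb hxb with h | h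
        · exact hP b h hab hxy
        · exact Or.inr (hab.trans h)
    · exact hξ.1 hx hy hxy
  have := hξ.2 hch (Set.subset_insert a ξ)
  rw [this]; exact Set.mem_insert a ξ

/-- For a partial order whose principal downsets are chains, the map
`ker(U) = {a | every branch through a meets U}` sends upper sets to upper sets and
is a nucleus on the frame of upper sets: inflationary, preserves binary
intersections, and idempotent. -/
theorem ker_is_nucleus
    {P : Type*} [PartialOrder P]
    (hP : ∀ a : P, IsChain (· ≤ ·) {x : P | x ≤ a})
    (ker : Set P → Set P)
    (hker : ∀ U : Set P, ker U =
      {a : P | ∀ ξ : Set P, IsMaxChain (· ≤ ·) ξ → a ∈ ξ → (ξ ∩ U).Nonempty}) :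
    (∀ U : Set P, IsUpperSet U → IsUpperSet (ker U)) ∧
    (∀ U : Set P, IsUpperSet U → U ⊆ ker U) ∧
    (∀ U V : Set P, IsUpperSet U → IsUpperSet V → ker (U ∩ V) = ker U ∩ ker V) ∧
    (∀ U : Set P, IsUpperSet U → ker (ker U) = ker U) := by
  have hinf : ∀ U : Set P, U ⊆ ker U := by
    intro U a ha
    rw [hker]
    exact fun ξ hξ haξ => ⟨a, haξ, ha⟩
  refine ⟨?_, fun U _ => hinf U, ?_, ?_⟩
  · intro U _
    intro a b hab ha
    rw [hker] at ha ⊢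
    intro ξ hξ hbξ
    exact ha ξ hξ (mem_maxChain_of_le hP hξ hab hbξ)
  · intro U V hU hV
    apply Set.Subset.antisymm
    · intro a ha
      rw [hker] at ha
      constructor
      · rw [hker]
        intro ξ hξ haξ
        obtain ⟨x, hx, hxU, _⟩ := ha ξ hξ haξ
        exact ⟨x, hx, hxU⟩
      · rw [hker]
        intro ξ hξ haξ
        obtain ⟨x, hx, _, hxV⟩ := ha ξ hξ haξ
        exact ⟨x, hx, hxV⟩
    · intro a ⟨haU, haV⟩
      rw [hker] at haU haV ⊢
      intro ξ hξ haξ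
      obtain ⟨u, huξ, huU⟩ := haU ξ hξ haξ
      obtain ⟨v, hvξ, hvV⟩ := haV ξ hξ haξ
      rcases eq_or_ne u v with rfl | huv
      · exact ⟨u, huξ, huU, hvV⟩
      · rcases hξ.1 huξ hvξ huv with h | h
        · exact ⟨v, hvξ, hU h huU, hvV⟩
        · exact ⟨u, huξ, huU, hV h hvV⟩
  · intro U _
    apply Set.Subset.antisymm
    · intro a ha
      rw [hker] at ha ⊢
      intro ξ hξ haξ
      obtain ⟨b, hbξ, hbker⟩ := ha ξ hξ haξ
      rw [hker] at hbker
      exact hbker ξ hξ hbξ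
    · exact hinf (ker U)
end
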